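/- Let n ≥ 3 and let C(n) = 𝓗^{n−2}(S^{n−2}). For t ≠ 0 define e(t,1) = C(n)^{−1} ∫_{S^{n−2}} ( t² + |e₁ − y|² )^{(2−n)/2} d𝓗^{n−2}(y), where e₁ is a fixed unit vector of ℝ^{n−1}. Then t ↦ e(t,1) is twice differentiable on (0,∞), and there is a constant C > 0 depending only on n such that |d²/dt² e(t,1)| ≤ C t^{−2} for all t ∈ (0, 1/2]. -/

import Mathlib

open MeasureTheory Metric Filter
open scoped ENNReal NNReal Topology

noncomputable section

/-- `C(n) = 𝓗^{n−2}(S^{n−2})`, the `(n−2)`-dimensional Hausdorff measure of the unit sphere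
`S^{n−2} ⊂ ℝ^{n−1}`. -/
def sphC (n : ℕ) : ℝ :=
  (μH[(n : ℝ) - 2] (Metric.sphere (0 : EuclideanSpace ℝ (Fin (n - 1))) 1)).toReal

/-- `e(t,1) = C(n)⁻¹ ∫_{S^{n−2}} (t² + |e₁ − y|²)^{(2−n)/2} d𝓗^{n−2}(y)`: the Newtonian
potential at `(t, e₁) ∈ ℝ × ℝ^{n−1} = ℝⁿ` of the normalized Hausdorff measure of the sphere
`{0} × S^{n−2} ⊂ ℝⁿ`. -/
def eFun1 (n : ℕ) (e₁ : EuclideanSpace ℝ (Fin (n - 1))) (t : ℝ) : ℝ :=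
  (sphC n)⁻¹ *
    ∫ y in Metric.sphere (0 : EuclideanSpace ℝ (Fin (n - 1))) 1,
      (t ^ 2 + ‖e₁ - y‖ ^ 2) ^ (((2 : ℝ) - n) / 2) ∂(μH[(n : ℝ) - 2])

lemma euclid_ball_bound (m : ℕ) {ρ : ℝ} (hρ : 0 ≤ ρ) :
    μH[(m:ℝ)] (closedBall (0 : EuclideanSpace ℝ (Fin m)) ρ)
      ≤ ENNReal.ofReal ((2 * Real.sqrt m * ρ) ^ m) := by
  set g : (Fin m → ℝ) → EuclideanSpace ℝ (Fin m) :=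
    fun x => (WithLp.equiv 2 (Fin m → ℝ)).symm x with hg
  have hlip : LipschitzWith (Real.sqrt m).toNNReal g := by
    apply LipschitzWith.of_dist_le_mul
    intro x y
    rw [EuclideanSpace.dist_eq]
    calc Real.sqrt (∑ i, dist (g x i) (g y i) ^ 2)
        ≤ Real.sqrt (∑ _i : Fin m, dist x y ^ 2) := by
          apply Real.sqrt_le_sqrt
          apply Finset.sum_le_sum
          intro i _
          have : dist (g x i) (g y i) = dist (x i) (y i) := rfl
          rw [this]
          exact pow_le_pow_left₀ dist_nonneg (dist_le_pi_dist x y i) 2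
      _ = Real.sqrt m * dist x y := by
          rw [Finset.sum_const, Finset.card_univ, Fintype.card_fin, nsmul_eq_mul,
            Real.sqrt_mul (by positivity), Real.sqrt_sq dist_nonneg]
      _ = (Real.sqrt m).toNNReal * dist x y := by
          rw [Real.coe_toNNReal _ (Real.sqrt_nonneg _)]
  have hsub : closedBall (0 : EuclideanSpace ℝ (Fin m)) ρ ⊆ g '' (closedBall 0 ρ) := by
    intro y hy
    refine ⟨WithLp.equiv 2 _ y, ?_, rfl⟩
    rw [mem_closedBall, dist_zero_right] at hy ⊢
    rw [pi_norm_le_iff_of_nonneg hρ]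
    intro i
    refine le_trans ?_ hy
    have hnorm : ‖y‖ = Real.sqrt (∑ j, ‖y j‖ ^ 2) := by
      rw [EuclideanSpace.norm_eq]
    rw [hnorm]
    have : ‖(WithLp.equiv 2 (Fin m → ℝ)) y i‖ = Real.sqrt (‖y i‖ ^ 2) := by
      rw [Real.sqrt_sq (norm_nonneg _)]; rfl
    rw [this]
    apply Real.sqrt_le_sqrt
    exact Finset.single_le_sum (f := fun j => ‖y j‖ ^ 2) (fun j _ => by positivity) (Finset.mem_univ i)
  calc μH[(m:ℝ)] (closedBall (0 : EuclideanSpace ℝ (Fin m)) ρ)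
      ≤ μH[(m:ℝ)] (g '' (closedBall 0 ρ)) := measure_mono hsub
    _ ≤ ((Real.sqrt m).toNNReal : ℝ≥0∞) ^ (m:ℝ) * μH[(m:ℝ)] (closedBall (0 : Fin m → ℝ) ρ) :=
        hlip.hausdorffMeasure_image_le (by positivity) _
    _ = ((Real.sqrt m).toNNReal : ℝ≥0∞) ^ (m:ℝ) * ENNReal.ofReal ((2 * ρ) ^ m) := by
        rw [show μH[(m:ℝ)] = (volume : Measure (Fin m → ℝ)) by
          rw [← hausdorffMeasure_pi_real (ι := Fin m), Fintype.card_fin]]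
        rw [Real.volume_pi_closedBall 0 hρ, Fintype.card_fin]
    _ ≤ ENNReal.ofReal ((2 * Real.sqrt m * ρ) ^ m) := by
        rw [ENNReal.rpow_natCast, ← ENNReal.ofReal_coe_nnreal,
          Real.coe_toNNReal _ (Real.sqrt_nonneg _),
          ← ENNReal.ofReal_pow (Real.sqrt_nonneg _),
          ← ENNReal.ofReal_mul (by positivity)]
        apply ENNReal.ofReal_le_ofReal
        rw [← mul_pow]
        apply pow_le_pow_left₀ (by positivity)
        ring_nf
        exact le_refl _

lemma sqrt_lip {F : Type*} [SeminormedAddCommGroup F] (v w : F) (hv : ‖v‖ ≤ 1/2) (hw : ‖w‖ ≤ 1/2) :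
    |Real.sqrt (1-‖v‖^2) - Real.sqrt (1-‖w‖^2)| ≤ ‖v - w‖ := by
  have hv0 := norm_nonneg v; have hw0 := norm_nonneg w
  have hsx : (1:ℝ)/2 ≤ Real.sqrt (1 - ‖v‖^2) := by
    rw [show (1:ℝ)/2 = Real.sqrt ((1/2)^2) by rw [Real.sqrt_sq]; norm_num]
    exact Real.sqrt_le_sqrt (by nlinarith)
  have hsy : (1:ℝ)/2 ≤ Real.sqrt (1 - ‖w‖^2) := by
    rw [show (1:ℝ)/2 = Real.sqrt ((1/2)^2) by rw [Real.sqrt_sq]; norm_num]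
    exact Real.sqrt_le_sqrt (by nlinarith)
  have hx2 : Real.sqrt (1 - ‖v‖^2) ^ 2 = 1 - ‖v‖^2 := Real.sq_sqrt (by nlinarith)
  have hy2 : Real.sqrt (1 - ‖w‖^2) ^ 2 = 1 - ‖w‖^2 := Real.sq_sqrt (by nlinarith)
  have hn1 : |‖w‖ - ‖v‖| ≤ ‖v - w‖ := by
    rw [norm_sub_rev]; exact abs_norm_sub_norm_le w v
  have hn1' : ‖w‖ - ‖v‖ ≤ ‖v - w‖ ∧ ‖v‖ - ‖w‖ ≤ ‖v - w‖ := by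
    constructor <;> [exact (abs_le.mp hn1).2 ; linarith [(abs_le.mp hn1).1]]
  rw [abs_le]
  constructor <;> nlinarith [hn1'.1, hn1'.2, norm_nonneg (v-w)]

lemma cap_mem_aux {s ρ nw nye : ℝ} (h1 : s^2 + nw^2 = 1) (h2 : (s-1)^2 + nw^2 = nye^2)
    (h : nye ≤ ρ) (hρ : ρ ≤ 1/2) (hρ0 : 0 ≤ ρ) (hnw : 0 ≤ nw) (hnye : 0 ≤ nye) :
    1/2 ≤ s ∧ nw ≤ ρ := by
  have hsq : (s-1)^2 + nw^2 ≤ ρ^2 := by nlinarith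
  constructor
  · nlinarith [sq_nonneg (s - 1/2), sq_nonneg nw]
  · nlinarith [sq_nonneg (s-1)]

lemma cap_bound {n : ℕ} (hn : 3 ≤ n) (e : EuclideanSpace ℝ (Fin (n-1))) (he : ‖e‖ = 1)
    {ρ : ℝ} (hρ0 : 0 ≤ ρ) (hρ : ρ ≤ 1/2) :
    μH[(n:ℝ)-2] (sphere (0 : EuclideanSpace ℝ (Fin (n-1))) 1 ∩ closedBall e ρ)
      ≤ ENNReal.ofReal ((4 * Real.sqrt ((n:ℝ)-2) * ρ) ^ (n-2)) := by
  have hiz : e ≠ 0 := by intro h; rw [h] at he; simp at he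
  have hfr : Module.finrank ℝ ((ℝ ∙ e)ᗮ) = n - 2 := by
    have h1 : Module.finrank ℝ (ℝ ∙ e) = 1 := finrank_span_singleton hiz
    have h2 := Submodule.finrank_add_finrank_orthogonal (K := ℝ ∙ e)
    have h3 : Module.finrank ℝ (EuclideanSpace ℝ (Fin (n-1))) = n - 1 :=
      finrank_euclideanSpace_fin
    rw [h1, h3] at h2
    omega
  have hcast : (((n-2:ℕ)) : ℝ) = (n:ℝ) - 2 := by
    rw [Nat.cast_sub (by omega : 2 ≤ n)]; push_cast; ring
  set W := (ℝ ∙ e)ᗮ with hW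
  obtain ⟨B⟩ : Nonempty (W ≃ₗᵢ[ℝ] EuclideanSpace ℝ (Fin (n-2))) :=
    ⟨((stdOrthonormalBasis ℝ W).reindex (finCongr hfr)).repr⟩
  set ψ : EuclideanSpace ℝ (Fin (n-2)) → EuclideanSpace ℝ (Fin (n-1)) :=
    fun v => Real.sqrt (1 - ‖v‖^2) • e + ((B.symm v : W) : EuclideanSpace ℝ (Fin (n-1))) with hψ
  have hmemW : ∀ x : EuclideanSpace ℝ (Fin (n-1)), x ∈ W ↔ (inner ℝ e x : ℝ) = 0 := by
    intro x
    rw [hW, Submodule.mem_orthogonal_singleton_iff_inner_right]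
  clear_value ψ W
  have hlip : LipschitzOnWith 2 ψ (closedBall 0 ρ) := by
    rw [lipschitzOnWith_iff_dist_le_mul]
    intro v hv w hw
    rw [mem_closedBall, dist_zero_right] at hv hw
    rw [dist_eq_norm, dist_eq_norm]
    have hdiff : ψ v - ψ w = (Real.sqrt (1-‖v‖^2) - Real.sqrt (1-‖w‖^2)) • e
        + ((B.symm (v - w) : W) : EuclideanSpace ℝ (Fin (n-1))) := by
      rw [hψ]
      simp only [map_sub, Submodule.coe_sub, sub_smul]
      abel
    rw [hdiff]
    have h1 : ‖(Real.sqrt (1-‖v‖^2) - Real.sqrt (1-‖w‖^2)) • e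
          + ((B.symm (v - w) : W) : EuclideanSpace ℝ (Fin (n-1)))‖
        ≤ ‖(Real.sqrt (1-‖v‖^2) - Real.sqrt (1-‖w‖^2)) • e‖
          + ‖((B.symm (v - w) : W) : EuclideanSpace ℝ (Fin (n-1)))‖ := norm_add_le _ _
    have h2 : ‖(Real.sqrt (1-‖v‖^2) - Real.sqrt (1-‖w‖^2)) • e‖
        = |Real.sqrt (1-‖v‖^2) - Real.sqrt (1-‖w‖^2)| := by
      rw [norm_smul, Real.norm_eq_abs, he, mul_one]
    have h3 : ‖((B.symm (v - w) : W) : EuclideanSpace ℝ (Fin (n-1)))‖ = ‖v - w‖ := by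
      rw [Submodule.norm_coe, LinearIsometryEquiv.norm_map]
    have h4 := sqrt_lip v w (hv.trans hρ) (hw.trans hρ)
    push_cast
    linarith
  have hsub : sphere (0 : EuclideanSpace ℝ (Fin (n-1))) 1 ∩ closedBall e ρ
      ⊆ ψ '' (closedBall 0 ρ) := by
    rintro y ⟨hy1, hy2⟩
    rw [mem_sphere_zero_iff_norm] at hy1
    rw [mem_closedBall, dist_eq_norm] at hy2
    have hwW : y - (inner ℝ e y : ℝ) • e ∈ W := by
      rw [hmemW, inner_sub_right, real_inner_smul_right, real_inner_self_eq_norm_sq, he]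
      ring
    set s : ℝ := inner ℝ e y with hs
    set w := y - s • e with hw'
    have hew : (inner ℝ e w : ℝ) = 0 := by rw [← hmemW]; exact hwW
    have hy_eq : y = s • e + w := by rw [hw']; abel
    have hpyth1 : s^2 + ‖w‖^2 = 1 := by
      have h := norm_add_sq_real (s • e) w
      rw [← hy_eq, hy1, norm_smul, Real.norm_eq_abs, he, mul_one, sq_abs,
        real_inner_smul_left, hew, mul_zero] at h
      linarith
    have hpyth2 : (s-1)^2 + ‖w‖^2 = ‖y - e‖^2 := by
      have hye : y - e = (s-1) • e + w := by rw [hy_eq, sub_smul, one_smul]; abel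
      have h := norm_add_sq_real ((s-1) • e) w
      rw [← hye, norm_smul, Real.norm_eq_abs, he, mul_one, sq_abs,
        real_inner_smul_left, hew, mul_zero] at h
      linarith
    obtain ⟨hs12, hwρ⟩ := cap_mem_aux hpyth1 hpyth2 hy2 hρ hρ0 (norm_nonneg w) (norm_nonneg _)
    have hseq : Real.sqrt (1 - ‖w‖^2) = s := by
      rw [show 1 - ‖w‖^2 = s^2 by linarith, Real.sqrt_sq (by linarith)]
    refine ⟨B ⟨w, hwW⟩, ?_, ?_⟩
    · rw [mem_closedBall, dist_zero_right, LinearIsometryEquiv.norm_map]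
      exact hwρ
    · rw [hψ]
      simp only [LinearIsometryEquiv.symm_apply_apply, LinearIsometryEquiv.norm_map]
      rw [show ‖(⟨w, hwW⟩ : W)‖ = ‖w‖ from rfl, hseq, ← hy_eq]
  calc μH[(n:ℝ)-2] (sphere (0 : EuclideanSpace ℝ (Fin (n-1))) 1 ∩ closedBall e ρ)
      ≤ μH[(n:ℝ)-2] (ψ '' (closedBall 0 ρ)) := measure_mono hsub
    _ ≤ ((2:ℝ≥0) : ℝ≥0∞) ^ ((n:ℝ)-2)
          * μH[(n:ℝ)-2] (closedBall (0 : EuclideanSpace ℝ (Fin (n-2))) ρ) :=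
        hlip.hausdorffMeasure_image_le
          (by rw [← hcast]; positivity)
    _ ≤ ((2:ℝ≥0) : ℝ≥0∞) ^ ((n:ℝ)-2) * ENNReal.ofReal ((2 * Real.sqrt ((n-2:ℕ)) * ρ) ^ (n-2)) := by
        apply mul_le_mul_right ?_ _
        rw [show ((n:ℝ)-2) = (((n-2:ℕ):ℕ):ℝ) from hcast.symm]
        exact euclid_ball_bound (n-2) hρ0
    _ ≤ ENNReal.ofReal ((4 * Real.sqrt ((n:ℝ)-2) * ρ) ^ (n-2)) := by
        rw [← hcast, ENNReal.rpow_natCast]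
        rw [show ((2:ℝ≥0) : ℝ≥0∞) = ENNReal.ofReal 2 by simp [ENNReal.ofReal_ofNat],
          ← ENNReal.ofReal_pow (by norm_num), ← ENNReal.ofReal_mul (by positivity)]
        apply ENNReal.ofReal_le_ofReal
        rw [← mul_pow]
        exact le_of_eq (by ring)

lemma sphere_meas_lt_top {n : ℕ} (hn : 3 ≤ n) :
    μH[(n:ℝ)-2] (sphere (0 : EuclideanSpace ℝ (Fin (n-1))) 1) < ⊤ := by
  obtain ⟨t, ht_sub, ht_cover⟩ :=
    (isCompact_sphere (0 : EuclideanSpace ℝ (Fin (n-1))) 1).elim_nhds_subcover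
      (fun x => ball x (1/2)) (fun x _ => ball_mem_nhds x (by norm_num))
  calc μH[(n:ℝ)-2] (sphere (0 : EuclideanSpace ℝ (Fin (n-1))) 1)
      ≤ μH[(n:ℝ)-2] (⋃ x ∈ t, sphere (0 : EuclideanSpace ℝ (Fin (n-1))) 1 ∩ closedBall x (1/2)) := by
        apply measure_mono
        intro y hy
        obtain ⟨x, hx, hyx⟩ := Set.mem_iUnion₂.mp (ht_cover hy)
        exact Set.mem_iUnion₂.mpr ⟨x, hx, ⟨hy, ball_subset_closedBall hyx⟩⟩
    _ ≤ ∑ x ∈ t, μH[(n:ℝ)-2] (sphere (0 : EuclideanSpace ℝ (Fin (n-1))) 1 ∩ closedBall x (1/2)) :=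
        measure_biUnion_finset_le _ _
    _ < ⊤ := by
        apply ENNReal.sum_lt_top.mpr
        intro x hx
        have hx1 : ‖x‖ = 1 := mem_sphere_zero_iff_norm.mp (ht_sub x hx)
        exact ((cap_bound hn x hx1 (by norm_num) (le_refl _)).trans_lt ENNReal.ofReal_lt_top)

lemma capAll {n : ℕ} (hn : 3 ≤ n) (e₁ : EuclideanSpace ℝ (Fin (n-1))) (he₁ : ‖e₁‖ = 1) :
    ∃ C : ℝ≥0∞, C ≠ ⊤ ∧ ∀ ρ : ℝ, 0 ≤ ρ →
      μH[(n:ℝ)-2] (sphere (0 : EuclideanSpace ℝ (Fin (n-1))) 1 ∩ closedBall e₁ ρ)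
        ≤ C * ENNReal.ofReal ρ ^ (n-2) := by
  set M := μH[(n:ℝ)-2] (sphere (0 : EuclideanSpace ℝ (Fin (n-1))) 1) with hM
  have hMfin : M ≠ ⊤ := (sphere_meas_lt_top hn).ne
  refine ⟨ENNReal.ofReal ((4 * Real.sqrt ((n:ℝ)-2)) ^ (n-2)) + M * 2^(n-2), by
    simp [ENNReal.add_ne_top, ENNReal.mul_ne_top, hMfin, ENNReal.pow_ne_top], ?_⟩
  intro ρ hρ0
  rcases le_or_gt ρ (1/2) with hρ | hρ
  · calc μH[(n:ℝ)-2] (sphere (0 : EuclideanSpace ℝ (Fin (n-1))) 1 ∩ closedBall e₁ ρ)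
        ≤ ENNReal.ofReal ((4 * Real.sqrt ((n:ℝ)-2) * ρ) ^ (n-2)) := cap_bound hn e₁ he₁ hρ0 hρ
      _ = ENNReal.ofReal ((4 * Real.sqrt ((n:ℝ)-2)) ^ (n-2)) * ENNReal.ofReal ρ ^ (n-2) := by
          rw [← ENNReal.ofReal_pow hρ0, ← ENNReal.ofReal_mul (by positivity), ← mul_pow]
      _ ≤ _ := by
          apply mul_le_mul_left le_self_add
  · calc μH[(n:ℝ)-2] (sphere (0 : EuclideanSpace ℝ (Fin (n-1))) 1 ∩ closedBall e₁ ρ)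
        ≤ M := measure_mono Set.inter_subset_left
      _ = M * 1 := (mul_one _).symm
      _ ≤ M * (2^(n-2) * ENNReal.ofReal ρ ^ (n-2)) := by
          apply mul_le_mul_right
          rw [← mul_pow]
          apply one_le_pow_of_one_le'
          calc (1:ℝ≥0∞) = 2 * ENNReal.ofReal (1/2) := by
                rw [ENNReal.ofReal_div_of_pos (by norm_num)]
                norm_num
                rw [ENNReal.mul_inv_cancel] <;> norm_num
            _ ≤ 2 * ENNReal.ofReal ρ := by
                exact mul_le_mul_right (ENNReal.ofReal_le_ofReal hρ.le) _
      _ ≤ _ := by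
          rw [← mul_assoc]
          exact mul_le_mul_left le_add_self _

lemma real_key1 {t : ℝ} (ht : 0 < t) (m : ℕ) :
    (t^2)^(-((m:ℝ)+2)/2) * t^m = 1/t^2 := by
  have h1 : (t^2)^(-((m:ℝ)+2)/2) = t ^ (-((m:ℝ)+2)) := by
    rw [← Real.rpow_natCast t 2, ← Real.rpow_mul ht.le]
    congr 1
    ring
  calc (t^2)^(-((m:ℝ)+2)/2) * t^m = t ^ (-((m:ℝ)+2)) * t ^ ((m:ℕ):ℝ) := by
        rw [h1, Real.rpow_natCast]
    _ = t ^ (-((m:ℝ)+2) + m) := (Real.rpow_add ht _ _).symm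
    _ = t ^ (-(2:ℝ)) := by norm_num
    _ = 1/t^2 := by
        rw [Real.rpow_neg ht.le, show ((2:ℝ)) = ((2:ℕ):ℝ) by norm_num, Real.rpow_natCast,
          one_div]

lemma real_key2 {t : ℝ} (ht : 0 < t) (m k : ℕ) :
    ((2^k*t)^2)^(-((m:ℝ)+2)/2) * (2^(k+1)*t)^m = 2^m * ((1/4)^k * (1/t^2)) := by
  have ha : (0:ℝ) < 2^k * t := by positivity
  have h0 : ((2:ℝ)^(k+1)*t) = 2 * (2^k * t) := by ring
  calc ((2^k*t)^2)^(-((m:ℝ)+2)/2) * (2^(k+1)*t)^m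
      = ((2^k*t)^2)^(-((m:ℝ)+2)/2) * ((2^k*t)^m * 2^m) := by rw [h0, mul_pow]; ring
    _ = (((2^k*t)^2)^(-((m:ℝ)+2)/2) * (2^k*t)^m) * 2^m := by ring
    _ = (1/(2^k*t)^2) * 2^m := by rw [real_key1 ha m]
    _ = 2^m * ((1/4)^k * (1/t^2)) := by
        have h4 : ((1:ℝ)/4)^k = 1/((2^k)^2) := by
          rw [div_pow, one_pow, ← pow_mul, mul_comm k 2, pow_mul]
          norm_num
        rw [h4, mul_pow]
        field_simp

lemma key_estimate {n : ℕ} (hn : 3 ≤ n) (e₁ : EuclideanSpace ℝ (Fin (n-1))) (he₁ : ‖e₁‖ = 1) :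
    ∃ K : ℝ≥0∞, K ≠ ⊤ ∧ ∀ t : ℝ, 0 < t →
      ∫⁻ y in sphere (0 : EuclideanSpace ℝ (Fin (n-1))) 1,
          ENNReal.ofReal ((t^2 + ‖e₁-y‖^2) ^ (-(n:ℝ)/2)) ∂μH[(n:ℝ)-2]
        ≤ K * ENNReal.ofReal (1/t^2) := by
  obtain ⟨C, hCfin, hcap⟩ := capAll hn e₁ he₁
  set m : ℕ := n - 2 with hm
  have hnm : (n:ℝ) = (m:ℝ) + 2 := by
    rw [hm, Nat.cast_sub (by omega : 2 ≤ n)]; push_cast; ring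
  set G : ℝ≥0∞ := (1 - ENNReal.ofReal (1/4))⁻¹ with hG
  have hGfin : G ≠ ⊤ := by
    rw [hG]
    simp only [ne_eq, ENNReal.inv_eq_top, tsub_eq_zero_iff_le, not_le]
    exact lt_of_lt_of_le (ENNReal.ofReal_lt_one.mpr (by norm_num)) (le_refl _)
  refine ⟨C * (1 + ENNReal.ofReal (2^m) * G), by
    apply ENNReal.mul_ne_top hCfin
    apply ENNReal.add_ne_top.mpr
    exact ⟨ENNReal.one_ne_top, ENNReal.mul_ne_top ENNReal.ofReal_ne_top hGfin⟩, ?_⟩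
  intro t ht
  set S := sphere (0 : EuclideanSpace ℝ (Fin (n-1))) 1 with hS
  set ν := μH[(n:ℝ)-2].restrict S with hν
  set f : EuclideanSpace ℝ (Fin (n-1)) → ℝ≥0∞ :=
    fun y => ENNReal.ofReal ((t^2 + ‖e₁-y‖^2) ^ (-(n:ℝ)/2)) with hf
  have hq : -(n:ℝ)/2 = -((m:ℝ)+2)/2 := by rw [hnm]
  -- pointwise bound on a set where distance ≥ a
  have hpt : ∀ (a : ℝ), 0 < a → ∀ y, a ≤ ‖e₁ - y‖ ∨ a = t →
      f y ≤ ENNReal.ofReal ((a^2) ^ (-(n:ℝ)/2)) := by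
    intro a ha y hy
    apply ENNReal.ofReal_le_ofReal
    apply Real.rpow_le_rpow_of_nonpos (by positivity)
    · rcases hy with hy | rfl
      · nlinarith [sq_nonneg t, norm_nonneg (e₁ - y), sq_nonneg (‖e₁-y‖ - a)]
      · nlinarith [sq_nonneg ‖e₁ - y‖]
    · have : (0:ℝ) < (n:ℝ) := by positivity
      linarith
  -- the measure of ν-balls
  have hνball : ∀ ρ : ℝ, 0 ≤ ρ → ν (closedBall e₁ ρ) ≤ C * ENNReal.ofReal ρ ^ m := by
    intro ρ hρ
    rw [hν, Measure.restrict_apply measurableSet_closedBall]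
    rw [Set.inter_comm]
    exact hcap ρ hρ
  have hA : MeasurableSet (ball e₁ t) := measurableSet_ball
  -- term 1
  have hterm1 : ∫⁻ y in ball e₁ t, f y ∂ν ≤ C * ENNReal.ofReal (1/t^2) := by
    calc ∫⁻ y in ball e₁ t, f y ∂ν
        ≤ ∫⁻ _ in ball e₁ t, ENNReal.ofReal ((t^2) ^ (-(n:ℝ)/2)) ∂ν :=
          setLIntegral_mono' hA (fun y _ => hpt t ht y (Or.inr rfl))
      _ = ENNReal.ofReal ((t^2) ^ (-(n:ℝ)/2)) * ν (ball e₁ t) := setLIntegral_const _ _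
      _ ≤ ENNReal.ofReal ((t^2) ^ (-(n:ℝ)/2)) * (C * ENNReal.ofReal t ^ m) := by
          apply mul_le_mul_right
          exact le_trans (measure_mono ball_subset_closedBall) (hνball t ht.le)
      _ = C * (ENNReal.ofReal ((t^2) ^ (-(n:ℝ)/2)) * ENNReal.ofReal t ^ m) := by ring
      _ = C * ENNReal.ofReal (1/t^2) := by
          rw [← ENNReal.ofReal_pow ht.le, ← ENNReal.ofReal_mul (by positivity), hq,
            real_key1 ht m]
  -- annuli
  set Ann : ℕ → Set (EuclideanSpace ℝ (Fin (n-1))) :=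
    fun k => closedBall e₁ (2^(k+1)*t) \ ball e₁ (2^k*t) with hAnn
  have hcover : (ball e₁ t)ᶜ ⊆ ⋃ k, Ann k := by
    intro y hy
    have hr : t ≤ dist y e₁ := by
      rw [Set.mem_compl_iff, mem_ball] at hy; linarith [not_lt.mp hy]
    have hx1 : (1:ℝ) ≤ dist y e₁ / t := (le_div_iff₀ ht).mpr (by linarith)
    have hx0 : (0:ℝ) ≤ dist y e₁ / t := by linarith
    set x := dist y e₁ / t with hx
    set n₀ := ⌊x⌋₊ with hn₀
    have hn₀1 : 1 ≤ n₀ := Nat.le_floor (by exact_mod_cast hx1)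
    set k := Nat.log 2 n₀ with hk
    have h2k : (2:ℝ)^k ≤ x := by
      calc ((2:ℝ))^k = ((2^k : ℕ) : ℝ) := by push_cast; ring
        _ ≤ (n₀ : ℝ) := by exact_mod_cast Nat.pow_log_le_self 2 (by omega)
        _ ≤ x := Nat.floor_le hx0
    have hxk : x ≤ (2:ℝ)^(k+1) := by
      have h1 : x < (n₀ : ℝ) + 1 := Nat.lt_floor_add_one x
      have h2 : n₀ + 1 ≤ 2^(k+1) := Nat.lt_pow_succ_log_self (by norm_num) n₀
      calc x ≤ (n₀ : ℝ) + 1 := h1.le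
        _ ≤ ((2^(k+1) : ℕ) : ℝ) := by exact_mod_cast h2
        _ = (2:ℝ)^(k+1) := by push_cast; ring
    have hxt : x * t = dist y e₁ := by rw [hx]; field_simp
    apply Set.mem_iUnion.mpr ⟨k, ?_⟩
    constructor
    · rw [mem_closedBall]
      calc dist y e₁ = x * t := hxt.symm
        _ ≤ 2^(k+1) * t := by nlinarith
    · rw [mem_ball]
      push_neg
      calc (2:ℝ)^k * t ≤ x * t := by nlinarith
        _ = dist y e₁ := hxt
  have hterm2k : ∀ k : ℕ, ∫⁻ y in Ann k, f y ∂ν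
      ≤ (C * ENNReal.ofReal (2^m) * ENNReal.ofReal (1/t^2)) * ENNReal.ofReal (1/4) ^ k := by
    intro k
    have hak : (0:ℝ) < 2^k * t := by positivity
    have hAnnm : MeasurableSet (Ann k) := measurableSet_closedBall.diff measurableSet_ball
    calc ∫⁻ y in Ann k, f y ∂ν
        ≤ ∫⁻ _ in Ann k, ENNReal.ofReal (((2^k*t)^2) ^ (-(n:ℝ)/2)) ∂ν := by
          apply setLIntegral_mono' hAnnm
          intro y hy
          apply hpt _ hak y
          left
          have := hy.2
          rw [mem_ball, not_lt] at this
          rw [← dist_eq_norm, dist_comm]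
          exact this
      _ = ENNReal.ofReal (((2^k*t)^2) ^ (-(n:ℝ)/2)) * ν (Ann k) := setLIntegral_const _ _
      _ ≤ ENNReal.ofReal (((2^k*t)^2) ^ (-(n:ℝ)/2)) * (C * ENNReal.ofReal (2^(k+1)*t) ^ m) := by
          apply mul_le_mul_right
          exact le_trans (measure_mono (Set.diff_subset.trans (le_refl _)))
            (hνball _ (by positivity))
      _ = C * (ENNReal.ofReal (((2^k*t)^2) ^ (-(n:ℝ)/2)) * ENNReal.ofReal (2^(k+1)*t) ^ m) := by
          ring
      _ = C * ENNReal.ofReal (2^m * ((1/4)^k * (1/t^2))) := by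
          rw [← ENNReal.ofReal_pow (by positivity), ← ENNReal.ofReal_mul (by positivity), hq,
            real_key2 ht m k]
      _ = (C * ENNReal.ofReal (2^m) * ENNReal.ofReal (1/t^2)) * ENNReal.ofReal (1/4) ^ k := by
          rw [ENNReal.ofReal_mul (by positivity), ENNReal.ofReal_mul (by positivity),
            ← ENNReal.ofReal_pow (by norm_num)]
          ring
  have hterm2 : ∫⁻ y in (ball e₁ t)ᶜ, f y ∂ν
      ≤ C * ENNReal.ofReal (2^m) * G * ENNReal.ofReal (1/t^2) := by
    calc ∫⁻ y in (ball e₁ t)ᶜ, f y ∂ν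
        ≤ ∫⁻ y in ⋃ k, Ann k, f y ∂ν := lintegral_mono_set hcover
      _ ≤ ∑' k, ∫⁻ y in Ann k, f y ∂ν := lintegral_iUnion_le _ _
      _ ≤ ∑' k : ℕ, (C * ENNReal.ofReal (2^m) * ENNReal.ofReal (1/t^2)) * ENNReal.ofReal (1/4) ^ k :=
          ENNReal.tsum_le_tsum hterm2k
      _ = (C * ENNReal.ofReal (2^m) * ENNReal.ofReal (1/t^2)) * G := by
          rw [ENNReal.tsum_mul_left, ENNReal.tsum_geometric]
      _ = C * ENNReal.ofReal (2^m) * G * ENNReal.ofReal (1/t^2) := by ring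
  calc ∫⁻ y in S, f y ∂μH[(n:ℝ)-2]
      = (∫⁻ y in ball e₁ t, f y ∂ν) + ∫⁻ y in (ball e₁ t)ᶜ, f y ∂ν :=
        (lintegral_add_compl f hA).symm
    _ ≤ C * ENNReal.ofReal (1/t^2) + C * ENNReal.ofReal (2^m) * G * ENNReal.ofReal (1/t^2) :=
        add_le_add hterm1 hterm2
    _ = C * (1 + ENNReal.ofReal (2^m) * G) * ENNReal.ofReal (1/t^2) := by ring

lemma hasDerivAt_g0 {c p t : ℝ} (hc : 0 ≤ c) (ht : t ≠ 0) :
    HasDerivAt (fun s : ℝ => (s^2 + c) ^ p) ((2*t) * p * (t^2+c)^(p-1)) t := by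
  have hu : HasDerivAt (fun s : ℝ => s^2 + c) (2*t) t := by
    simpa using (hasDerivAt_pow 2 t).add_const c
  have hne : t^2 + c ≠ 0 := by positivity
  exact hu.rpow_const (Or.inl hne)

lemma hasDerivAt_g1 {c p t : ℝ} (hc : 0 ≤ c) (ht : t ≠ 0) :
    HasDerivAt (fun s : ℝ => (2*s) * p * (s^2+c)^(p-1))
      ((2*p) * (t^2+c)^(p-1) + ((2*t)*p) * ((2*t)*(p-1)*(t^2+c)^(p-1-1))) t := by
  have h1 : HasDerivAt (fun s : ℝ => (2*s) * p) (2*p) t := by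
    simpa using ((hasDerivAt_id t).const_mul 2).mul_const p
  have h2 : HasDerivAt (fun s : ℝ => (s^2+c)^(p-1)) ((2*t)*(p-1)*(t^2+c)^(p-1-1)) t :=
    hasDerivAt_g0 hc ht (p := p-1)
  exact h1.mul h2

-- bounds

lemma abs_g1_le {c p t t₀ : ℝ} (hc : 0 ≤ c) (ht₀ : 0 < t₀) (hp : p ≤ 0)
    (ht : |t - t₀| < t₀/2) :
    |(2*t) * p * (t^2+c)^(p-1)| ≤ 3*t₀* |p| *(t₀^2/4)^(p-1) := by
  obtain ⟨h1, h2⟩ := abs_sub_lt_iff.mp ht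
  have htpos : t₀/2 < t := by linarith
  have hub : t < 3*t₀/2 := by linarith
  have hu : t₀^2/4 ≤ t^2 + c := by nlinarith
  have hrp : (t^2+c)^(p-1) ≤ (t₀^2/4)^(p-1) :=
    Real.rpow_le_rpow_of_nonpos (by positivity) hu (by linarith)
  have hrp0 : (0:ℝ) ≤ (t^2+c)^(p-1) := Real.rpow_nonneg (by nlinarith) _
  rw [abs_mul, abs_mul]
  have h2t : |2*t| ≤ 3*t₀ := by rw [abs_of_pos (by linarith)]; linarith
  have habs : |(t^2+c)^(p-1)| = (t^2+c)^(p-1) := abs_of_nonneg hrp0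
  rw [habs]
  calc |2*t| * |p| * (t^2+c)^(p-1) ≤ (3*t₀) * |p| * (t₀^2/4)^(p-1) := by
        apply mul_le_mul (mul_le_mul h2t (le_refl _) (abs_nonneg _) (by linarith)) hrp hrp0
        positivity
    _ = 3*t₀* |p| *(t₀^2/4)^(p-1) := by ring

lemma abs_g2_le_loc {c p t t₀ : ℝ} (hc : 0 ≤ c) (ht₀ : 0 < t₀) (hp : p ≤ 0)
    (ht : |t - t₀| < t₀/2) :
    |(2*p) * (t^2+c)^(p-1) + ((2*t)*p) * ((2*t)*(p-1)*(t^2+c)^(p-1-1))|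
      ≤ 2* |p| *(t₀^2/4)^(p-1) + (3*t₀)* |p| *((3*t₀)* |p-1| *(t₀^2/4)^(p-1-1)) := by
  obtain ⟨h1, h2⟩ := abs_sub_lt_iff.mp ht
  have htpos : t₀/2 < t := by linarith
  have hub : t < 3*t₀/2 := by linarith
  have hu : t₀^2/4 ≤ t^2 + c := by nlinarith
  have hupos : (0:ℝ) < t^2 + c := by nlinarith
  have hrp1 : (t^2+c)^(p-1) ≤ (t₀^2/4)^(p-1) :=
    Real.rpow_le_rpow_of_nonpos (by positivity) hu (by linarith)
  have hrp2 : (t^2+c)^(p-1-1) ≤ (t₀^2/4)^(p-1-1) :=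
    Real.rpow_le_rpow_of_nonpos (by positivity) hu (by linarith)
  have hrp10 : (0:ℝ) ≤ (t^2+c)^(p-1) := Real.rpow_nonneg hupos.le _
  have hrp20 : (0:ℝ) ≤ (t^2+c)^(p-1-1) := Real.rpow_nonneg hupos.le _
  have h2t : |2*t| ≤ 3*t₀ := by rw [abs_of_pos (by linarith)]; linarith
  calc |(2*p) * (t^2+c)^(p-1) + ((2*t)*p) * ((2*t)*(p-1)*(t^2+c)^(p-1-1))|
      ≤ |(2*p) * (t^2+c)^(p-1)| + |((2*t)*p) * ((2*t)*(p-1)*(t^2+c)^(p-1-1))| := abs_add_le _ _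
    _ ≤ 2* |p| *(t₀^2/4)^(p-1) + (3*t₀)* |p| *((3*t₀)* |p-1| *(t₀^2/4)^(p-1-1)) := by
        apply add_le_add
        · rw [abs_mul, abs_mul, abs_of_nonneg (by norm_num : (0:ℝ) ≤ (2:ℝ)),
            abs_of_nonneg hrp10]
          calc 2 * |p| * (t^2+c)^(p-1) ≤ 2 * |p| * (t₀^2/4)^(p-1) := by
                apply mul_le_mul_of_nonneg_left hrp1 (by positivity)
            _ = 2* |p| *(t₀^2/4)^(p-1) := by ring
        · rw [abs_mul]
          have e1 : |(2*t)*p| ≤ (3*t₀) * |p| := by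
            rw [abs_mul]; exact mul_le_mul_of_nonneg_right h2t (abs_nonneg _)
          have e2 : |(2*t)*(p-1)*(t^2+c)^(p-1-1)| ≤ (3*t₀) * |p-1| * (t₀^2/4)^(p-1-1) := by
            rw [abs_mul, abs_mul, abs_of_nonneg hrp20]
            apply mul_le_mul (mul_le_mul h2t (le_refl _) (abs_nonneg _) (by linarith)) hrp2
              hrp20 (by positivity)
          calc |(2*t)*p| * |(2*t)*(p-1)*(t^2+c)^(p-1-1)|
              ≤ ((3*t₀) * |p|) * ((3*t₀) * |p-1| * (t₀^2/4)^(p-1-1)) :=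
                mul_le_mul e1 e2 (abs_nonneg _) (by positivity)
            _ = (3*t₀) * |p| * ((3*t₀) * |p-1| * (t₀^2/4)^(p-1-1)) := by ring

lemma abs_g2_le_pt {c p t : ℝ} (hc : 0 ≤ c) (ht : 0 < t) :
    |(2*p) * (t^2+c)^(p-1) + ((2*t)*p) * ((2*t)*(p-1)*(t^2+c)^(p-1-1))|
      ≤ (2* |p| + 4* |p| * |p-1|) * (t^2+c)^(p-1) := by
  have hupos : (0:ℝ) < t^2 + c := by nlinarith
  have hrp10 : (0:ℝ) ≤ (t^2+c)^(p-1) := Real.rpow_nonneg hupos.le _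
  have hrp20 : (0:ℝ) ≤ (t^2+c)^(p-1-1) := Real.rpow_nonneg hupos.le _
  have hkey : t^2 * (t^2+c)^(p-1-1) ≤ (t^2+c)^(p-1) := by
    have : (t^2+c)^(p-1-1) * (t^2+c) = (t^2+c)^(p-1) := by
      rw [← Real.rpow_add_one hupos.ne']
      congr 1
      ring
    nlinarith [this, hrp20]
  calc |(2*p) * (t^2+c)^(p-1) + ((2*t)*p) * ((2*t)*(p-1)*(t^2+c)^(p-1-1))|
      ≤ |(2*p) * (t^2+c)^(p-1)| + |((2*t)*p) * ((2*t)*(p-1)*(t^2+c)^(p-1-1))| := abs_add_le _ _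
    _ ≤ 2* |p| * (t^2+c)^(p-1) + 4* |p| * |p-1| * (t^2+c)^(p-1) := by
        apply add_le_add
        · rw [abs_mul, abs_mul, abs_of_nonneg (by norm_num : (0:ℝ) ≤ (2:ℝ)),
            abs_of_nonneg hrp10]
        · have hexp : ((2*t)*p) * ((2*t)*(p-1)*(t^2+c)^(p-1-1))
              = (4*p*(p-1)) * (t^2 * (t^2+c)^(p-1-1)) := by ring
          rw [hexp, abs_mul]
          have h1 : |4*p*(p-1)| ≤ 4* |p| * |p-1| := by
            rw [abs_mul, abs_mul, abs_of_nonneg (by norm_num : (0:ℝ) ≤ (4:ℝ))]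
          have h2 : |t^2 * (t^2+c)^(p-1-1)| ≤ (t^2+c)^(p-1) := by
            rw [abs_of_nonneg (by positivity)]
            exact hkey
          calc |4*p*(p-1)| * |t^2 * (t^2+c)^(p-1-1)|
              ≤ (4* |p| * |p-1|) * (t^2+c)^(p-1) :=
                mul_le_mul h1 h2 (abs_nonneg _) (by positivity)
            _ = 4* |p| * |p-1| * (t^2+c)^(p-1) := by ring
    _ = (2* |p| + 4* |p| * |p-1|) * (t^2+c)^(p-1) := by ring

/-- For `n ≥ 3` and a fixed unit vector `e₁` of `ℝ^{n−1}`, the function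
`t ↦ e(t,1)` is twice differentiable on `(0,∞)`, and there is `C > 0` depending only on `n`
such that `|d²/dt² e(t,1)| ≤ C t⁻²` for all `t ∈ (0,1/2]`. -/
theorem stmt17 (n : ℕ) (hn : 3 ≤ n)
    (e₁ : EuclideanSpace ℝ (Fin (n - 1))) (he₁ : ‖e₁‖ = 1) :
    (∀ t : ℝ, 0 < t → DifferentiableAt ℝ (eFun1 n e₁) t) ∧
    (∀ t : ℝ, 0 < t → DifferentiableAt ℝ (deriv (eFun1 n e₁)) t) ∧
    ∃ C : ℝ, 0 < C ∧ ∀ t : ℝ, 0 < t → t ≤ 1 / 2 →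
      |iteratedDeriv 2 (eFun1 n e₁) t| ≤ C / t ^ 2 := by
  set S := sphere (0 : EuclideanSpace ℝ (Fin (n-1))) 1 with hS
  set ν := μH[(n:ℝ)-2].restrict S with hν
  haveI : IsFiniteMeasure ν :=
    ⟨by rw [hν, Measure.restrict_apply_univ]; exact sphere_meas_lt_top hn⟩
  set p : ℝ := ((2:ℝ) - n)/2 with hp
  have hn3 : (3:ℝ) ≤ (n:ℝ) := by exact_mod_cast hn
  have hp0 : p ≤ 0 := by rw [hp]; linarith
  have hp10 : p - 1 ≤ 0 := by linarith
  -- continuity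
  have hcont : ∀ (q t : ℝ), t ≠ 0 →
      Continuous (fun y : EuclideanSpace ℝ (Fin (n-1)) => (t^2 + ‖e₁-y‖^2)^q) := by
    intro q t ht
    apply Continuous.rpow_const
    · exact continuous_const.add (((continuous_const.sub continuous_id).norm).pow 2)
    · intro y; left; positivity
  -- integrability
  have hint : ∀ (q t : ℝ), q ≤ 0 → 0 < t →
      Integrable (fun y : EuclideanSpace ℝ (Fin (n-1)) => (t^2 + ‖e₁-y‖^2)^q) ν := by
    intro q t hq ht
    apply Integrable.mono' (integrable_const ((t^2)^q))
      ((hcont q t ht.ne').aestronglyMeasurable)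
    apply ae_of_all
    intro y
    rw [Real.norm_eq_abs, abs_of_nonneg (Real.rpow_nonneg (by positivity) _)]
    exact Real.rpow_le_rpow_of_nonpos (by positivity)
      (by nlinarith [sq_nonneg ‖e₁-y‖]) hq
  set F : ℝ → ℝ := fun t => ∫ y in S, (t^2 + ‖e₁-y‖^2) ^ p ∂μH[(n:ℝ)-2] with hF
  set G1 : ℝ → ℝ :=
    fun t => ∫ y in S, (2*t)*p*(t^2+‖e₁-y‖^2)^(p-1) ∂μH[(n:ℝ)-2] with hG1
  set G2 : ℝ → ℝ :=
    fun t => ∫ y in S, ((2*p)*(t^2+‖e₁-y‖^2)^(p-1)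
      + ((2*t)*p)*((2*t)*(p-1)*(t^2+‖e₁-y‖^2)^(p-1-1))) ∂μH[(n:ℝ)-2] with hG2
  have hballpos : ∀ t₀ : ℝ, 0 < t₀ → ∀ t ∈ ball t₀ (t₀/2), 0 < t := by
    intro t₀ ht₀ t htm
    rw [mem_ball, Real.dist_eq] at htm
    have := abs_sub_lt_iff.mp htm
    linarith [this.1, this.2]
  -- first derivative
  have hasF : ∀ t₀ : ℝ, 0 < t₀ → HasDerivAt F (G1 t₀) t₀ := by
    intro t₀ ht₀
    have H := hasDerivAt_integral_of_dominated_loc_of_deriv_le (μ := ν) (x₀ := t₀)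
      (s := ball t₀ (t₀/2))
      (F := fun t (y : EuclideanSpace ℝ (Fin (n-1))) => (t^2 + ‖e₁-y‖^2) ^ p)
      (F' := fun t (y : EuclideanSpace ℝ (Fin (n-1))) => (2*t)*p*(t^2+‖e₁-y‖^2)^(p-1))
      (bound := fun _ => 3*t₀* |p| *(t₀^2/4)^(p-1))
      (ball_mem_nhds t₀ (by positivity))
      (eventually_of_mem (ball_mem_nhds t₀ (by positivity)) (fun t htm =>
        (hcont p t (hballpos t₀ ht₀ t htm).ne').aestronglyMeasurable))
      (hint p t₀ hp0 ht₀)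
      (((hint (p-1) t₀ hp10 ht₀).const_mul ((2*t₀)*p)).aestronglyMeasurable)
      (ae_of_all _ (fun y t htm => by
        rw [Real.norm_eq_abs]
        rw [mem_ball, Real.dist_eq] at htm
        exact abs_g1_le (by positivity) ht₀ hp0 htm))
      (integrable_const _)
      (ae_of_all _ (fun y t htm =>
        hasDerivAt_g0 (by positivity) (hballpos t₀ ht₀ t htm).ne'))
    exact H.2
  -- second derivative
  have hasG1 : ∀ t₀ : ℝ, 0 < t₀ → HasDerivAt G1 (G2 t₀) t₀ := by
    intro t₀ ht₀
    have H := hasDerivAt_integral_of_dominated_loc_of_deriv_le (μ := ν) (x₀ := t₀)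
      (s := ball t₀ (t₀/2))
      (F := fun t (y : EuclideanSpace ℝ (Fin (n-1))) => (2*t)*p*(t^2+‖e₁-y‖^2)^(p-1))
      (F' := fun t (y : EuclideanSpace ℝ (Fin (n-1))) => (2*p)*(t^2+‖e₁-y‖^2)^(p-1)
        + ((2*t)*p)*((2*t)*(p-1)*(t^2+‖e₁-y‖^2)^(p-1-1)))
      (bound := fun _ => 2* |p| *(t₀^2/4)^(p-1) + (3*t₀)* |p| *((3*t₀)* |p-1| *(t₀^2/4)^(p-1-1)))
      (ball_mem_nhds t₀ (by positivity))
      (eventually_of_mem (ball_mem_nhds t₀ (by positivity)) (fun t htm =>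
        (continuous_const.mul (hcont (p-1) t (hballpos t₀ ht₀ t htm).ne')).aestronglyMeasurable))
      ((hint (p-1) t₀ hp10 ht₀).const_mul ((2*t₀)*p))
      (((continuous_const.mul (hcont (p-1) t₀ ht₀.ne')).add
        (continuous_const.mul (continuous_const.mul
          (hcont (p-1-1) t₀ ht₀.ne')))).aestronglyMeasurable)
      (ae_of_all _ (fun y t htm => by
        rw [Real.norm_eq_abs]
        rw [mem_ball, Real.dist_eq] at htm
        exact abs_g2_le_loc (by positivity) ht₀ hp0 htm))
      (integrable_const _)
      (ae_of_all _ (fun y t htm =>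
        hasDerivAt_g1 (by positivity) (hballpos t₀ ht₀ t htm).ne'))
    exact H.2
  have heF : eFun1 n e₁ = fun t => (sphC n)⁻¹ * F t := rfl
  have hderiv_eq : ∀ t : ℝ, 0 < t → deriv (eFun1 n e₁) t = (sphC n)⁻¹ * G1 t := by
    intro t ht
    rw [heF]
    exact (((hasF t ht).const_mul ((sphC n)⁻¹))).deriv
  have hEq : ∀ t : ℝ, 0 < t →
      deriv (eFun1 n e₁) =ᶠ[𝓝 t] fun s => (sphC n)⁻¹ * G1 s := by
    intro t ht
    filter_upwards [Ioi_mem_nhds ht] with s hs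
    exact hderiv_eq s hs
  refine ⟨?_, ?_, ?_⟩
  · intro t ht
    rw [heF]
    exact ((hasF t ht).const_mul _).differentiableAt
  · intro t ht
    apply ((hEq t ht).differentiableAt_iff).mpr
    exact ((hasG1 t ht).const_mul _).differentiableAt
  · obtain ⟨K, hKfin, hK⟩ := key_estimate hn e₁ he₁
    set cB : ℝ := 2* |p| + 4* |p| * |p-1| with hcB
    have hcB0 : (0:ℝ) ≤ cB := by rw [hcB]; positivity
    set D : ℝ := |(sphC n)⁻¹| * (cB * K.toReal) with hD
    have hD0 : 0 ≤ D := by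
      rw [hD]
      have := ENNReal.toReal_nonneg (a := K)
      positivity
    refine ⟨D + 1, by linarith, ?_⟩
    intro t ht ht2
    have hit : iteratedDeriv 2 (eFun1 n e₁) t = deriv (deriv (eFun1 n e₁)) t := by
      rw [iteratedDeriv_succ, iteratedDeriv_one]
    have hd2 : deriv (deriv (eFun1 n e₁)) t = (sphC n)⁻¹ * G2 t := by
      rw [(hEq t ht).deriv_eq]
      exact ((hasG1 t ht).const_mul _).deriv
    rw [hit, hd2]
    have hpm : p - 1 = -(n:ℝ)/2 := by rw [hp]; ring
    -- bound on the lintegral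
    have h2 : (∫⁻ y in S, ENNReal.ofReal ‖(2*p)*(t^2+‖e₁-y‖^2)^(p-1)
          + ((2*t)*p)*((2*t)*(p-1)*(t^2+‖e₁-y‖^2)^(p-1-1))‖ ∂μH[(n:ℝ)-2])
        ≤ ENNReal.ofReal cB * (K * ENNReal.ofReal (1/t^2)) := by
      calc (∫⁻ y in S, ENNReal.ofReal ‖(2*p)*(t^2+‖e₁-y‖^2)^(p-1)
            + ((2*t)*p)*((2*t)*(p-1)*(t^2+‖e₁-y‖^2)^(p-1-1))‖ ∂μH[(n:ℝ)-2])
          ≤ ∫⁻ y in S, ENNReal.ofReal (cB * (t^2+‖e₁-y‖^2)^(p-1)) ∂μH[(n:ℝ)-2] := by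
            apply lintegral_mono
            intro y
            apply ENNReal.ofReal_le_ofReal
            rw [Real.norm_eq_abs]
            exact abs_g2_le_pt (by positivity) ht
        _ = ∫⁻ y in S, ENNReal.ofReal cB
              * ENNReal.ofReal ((t^2+‖e₁-y‖^2)^(p-1)) ∂μH[(n:ℝ)-2] := by
            simp_rw [ENNReal.ofReal_mul hcB0]
        _ = ENNReal.ofReal cB
              * ∫⁻ y in S, ENNReal.ofReal ((t^2+‖e₁-y‖^2)^(p-1)) ∂μH[(n:ℝ)-2] :=
            lintegral_const_mul' _ _ ENNReal.ofReal_ne_top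
        _ ≤ ENNReal.ofReal cB * (K * ENNReal.ofReal (1/t^2)) := by
            apply mul_le_mul_right
            rw [hpm]
            exact hK t ht
    have hfin : ENNReal.ofReal cB * (K * ENNReal.ofReal (1/t^2)) ≠ ⊤ :=
      ENNReal.mul_ne_top ENNReal.ofReal_ne_top
        (ENNReal.mul_ne_top hKfin ENNReal.ofReal_ne_top)
    have hbound : |G2 t| ≤ cB * (K.toReal * (1/t^2)) := by
      calc |G2 t| = ‖G2 t‖ := (Real.norm_eq_abs _).symm
        _ ≤ (∫⁻ y in S, ENNReal.ofReal ‖(2*p)*(t^2+‖e₁-y‖^2)^(p-1)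
            + ((2*t)*p)*((2*t)*(p-1)*(t^2+‖e₁-y‖^2)^(p-1-1))‖ ∂μH[(n:ℝ)-2]).toReal := by
            rw [hG2]
            exact norm_integral_le_lintegral_norm _
        _ ≤ (ENNReal.ofReal cB * (K * ENNReal.ofReal (1/t^2))).toReal :=
            ENNReal.toReal_mono hfin h2
        _ = cB * (K.toReal * (1/t^2)) := by
            rw [ENNReal.toReal_mul, ENNReal.toReal_mul, ENNReal.toReal_ofReal hcB0,
              ENNReal.toReal_ofReal (by positivity)]
    calc |(sphC n)⁻¹ * G2 t| = |(sphC n)⁻¹| * |G2 t| := abs_mul _ _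
      _ ≤ |(sphC n)⁻¹| * (cB * (K.toReal * (1/t^2))) :=
          mul_le_mul_of_nonneg_left hbound (abs_nonneg _)
      _ = D * (1/t^2) := by rw [hD]; ring
      _ = D / t^2 := by ring
      _ ≤ (D+1) / t^2 := by gcongr; linarith

end
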